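/- The reduced Artin group of affine type Â_l for l > 1 is isomorphic to the symmetric group S_{l+1} via the natural surjection onto the linear finite Weyl group modulo its center. -/

import Mathlib

/-!
STATEMENT 2: The reduced Artin group of affine type `Â_l` for `l > 1` is isomorphic
to the symmetric group `S_{l+1}` via the natural surjection onto the linear finite Weyl
group modulo its center.

The reduced Artin group is the quotient of `Art_{Â_l} ⋊ S(Γ)` by the relations
`Δ_i g_i = 1` (for `i` special) and `Δ_{ij} g_{ij} = 1` (for `i, j` distinct special).
For `Γ = Â_l` (a polygon with `l+1` vertices, all special), `S(Γ) = Aut(Γ)` is the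
dihedral group of order `2(l+1)`; `g_i` is the reflection of the polygon fixing `i`
(`x ↦ 2i − x`) and `g_{ij}` the reflection interchanging `i` and `j` (`x ↦ i + j − x`).
We realize the semidirect product and its quotient as a single presented group on
generators `T i` (`i ∈ Z/(l+1)`) and `D g` (`g ∈ DihedralGroup (l+1)`).  For `l > 1`
the linear Weyl group of type `Â_l` is `S_{l+1}` and does not contain `−1`, so
`W̄ = S_{l+1}`, realized here as `Equiv.Perm (ZMod (l+1))`, the generator `t_i`
mapping to the transposition of `i` and `i+1`.
-/

namespace Stmt2

open FreeGroup

/-- The left action of the dihedral group on the vertices `ZMod n` of the polygon: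
rotations and reflections. -/
def dact {n : ℕ} : DihedralGroup n → ZMod n → ZMod n
  | DihedralGroup.r a, x => x - a
  | DihedralGroup.sr a, x => a - x

/-- abbreviation for the free-group generator `t_i`. -/
def T {l : ℕ} (i : ZMod (l + 1)) : FreeGroup (ZMod (l + 1) ⊕ DihedralGroup (l + 1)) :=
  FreeGroup.of (Sum.inl i)

/-- abbreviation for the free-group generator corresponding to `g ∈ S(Γ)`. -/
def D {l : ℕ} (g : DihedralGroup (l + 1)) :
    FreeGroup (ZMod (l + 1) ⊕ DihedralGroup (l + 1)) :=
  FreeGroup.of (Sum.inr g)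

/-- The product `t_{i+1} t_{i+2} ⋯ t_{i+m}` in the free group. -/
def chainF (l : ℕ) (i : ZMod (l + 1)) (m : ℕ) :
    FreeGroup (ZMod (l + 1) ⊕ DihedralGroup (l + 1)) :=
  ((List.range m).map (fun s => T (i + (s : ZMod (l + 1)) + 1))).prod

/-- The Garside element of the type `A_m` chain `t_{i+1}, ..., t_{i+m}`. -/
def garsideF (l : ℕ) (i : ZMod (l + 1)) (m : ℕ) :
    FreeGroup (ZMod (l + 1) ⊕ DihedralGroup (l + 1)) :=
  (((List.range m).reverse).map (fun s => chainF l i (s + 1))).prod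

/-- Relators of the reduced Artin group of type `Â_l`: braid relations, the
multiplication table of `S(Γ)` (dihedral), the semidirect-product (conjugation)
relations, and the Garside relations `Δ_i g_i = 1`, `Δ_{ij} g_{ij} = 1`. -/
def redArtinRels (l : ℕ) : Set (FreeGroup (ZMod (l + 1) ⊕ DihedralGroup (l + 1))) :=
  { w | (∃ i : ZMod (l + 1),
          w = T i * T (i + 1) * T i * (T (i + 1) * T i * T (i + 1))⁻¹) ∨
        (∃ i j : ZMod (l + 1), i ≠ j ∧ i + 1 ≠ j ∧ j + 1 ≠ i ∧
          w = T i * T j * (T j * T i)⁻¹) ∨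
        (∃ g h : DihedralGroup (l + 1), w = D g * D h * (D (g * h))⁻¹) ∨
        (∃ (g : DihedralGroup (l + 1)) (i : ZMod (l + 1)),
          w = D g * T i * (D g)⁻¹ * (T (dact g i))⁻¹) ∨
        -- `Δ_i g_i = 1` for every (special) vertex `i`; `g_i = sr (2i)` fixes `i`
        (∃ i : ZMod (l + 1),
          w = garsideF l i l * D (DihedralGroup.sr (2 * i))) ∨
        -- `Δ_{ij} g_{ij} = 1` for distinct (special) vertices; `g_{ij} = sr (i+j)`
        (∃ i j : ZMod (l + 1), i ≠ j ∧
          w = garsideF l i ((j - i).val - 1) * garsideF l j ((i - j).val - 1) *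
              D (DihedralGroup.sr (i + j))) }

/-- The reduced Artin group of affine type `Â_l`. -/
abbrev ReducedArtinAhat (l : ℕ) := PresentedGroup (redArtinRels l)

end Stmt2


namespace Stmt2Aux

open Equiv

/-- Relators for the standard presentation of the symmetric group `S_{N+1}` on
adjacent transpositions `x_0, ..., x_{N-1}`. -/
def symRels (N : ℕ) : Set (FreeGroup (Fin N)) :=
  { w | (∃ i : Fin N, w = FreeGroup.of i * FreeGroup.of i) ∨
        (∃ i j : Fin N, (i : ℕ) + 1 = (j : ℕ) ∧
          w = FreeGroup.of i * FreeGroup.of j * FreeGroup.of i *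
              (FreeGroup.of j * FreeGroup.of i * FreeGroup.of j)⁻¹) ∨
        (∃ i j : Fin N, (i : ℕ) + 2 ≤ (j : ℕ) ∧
          w = FreeGroup.of i * FreeGroup.of j * (FreeGroup.of j * FreeGroup.of i)⁻¹) }

abbrev SymP (N : ℕ) := PresentedGroup (symRels N)

def X {N : ℕ} (i : Fin N) : SymP N := PresentedGroup.of i

lemma relquot {α : Type*} {rels : Set (FreeGroup α)} {r : FreeGroup α} (h : r ∈ rels) :
    PresentedGroup.mk rels r = 1 := by
  have : r ∈ Subgroup.normalClosure rels := Subgroup.subset_normalClosure h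
  exact (QuotientGroup.eq_one_iff r).mpr this

lemma mk_of {α : Type*} (rels : Set (FreeGroup α)) (x : α) :
    PresentedGroup.mk rels (FreeGroup.of x) = PresentedGroup.of x := rfl

lemma X_sq {N : ℕ} (i : Fin N) : X i * X i = 1 := by
  have := relquot (rels := symRels N) (Or.inl ⟨i, rfl⟩)
  simpa [X, map_mul, mk_of] using this

lemma X_inv {N : ℕ} (i : Fin N) : (X i)⁻¹ = X i := by
  rw [inv_eq_iff_mul_eq_one]; exact X_sq i

lemma X_braid {N : ℕ} {i j : Fin N} (h : (i : ℕ) + 1 = (j : ℕ)) :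
    X i * X j * X i = X j * X i * X j := by
  have := relquot (rels := symRels N) (Or.inr (Or.inl ⟨i, j, h, rfl⟩))
  simp only [map_mul, map_inv, mk_of] at this
  rw [mul_inv_eq_one] at this
  exact this

lemma X_comm {N : ℕ} {i j : Fin N} (h : (i : ℕ) + 2 ≤ (j : ℕ)) :
    X i * X j = X j * X i := by
  have := relquot (rels := symRels N) (Or.inr (Or.inr ⟨i, j, h, rfl⟩))
  simp only [map_mul, map_inv, mk_of] at this
  rw [mul_inv_eq_one] at this
  exact this



/-- The shift homomorphism `SymP N →* SymP (N+1)`, `x_i ↦ x_{i+1}`. -/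
def step (N : ℕ) : SymP N →* SymP (N + 1) :=
  PresentedGroup.toGroup (f := fun i => X i.succ) (by
    rintro r (⟨i, rfl⟩ | ⟨i, j, hij, rfl⟩ | ⟨i, j, hij, rfl⟩) <;>
      simp only [map_mul, map_inv, FreeGroup.lift_apply_of]
    · exact X_sq i.succ
    · rw [mul_inv_eq_one]
      exact X_braid (i := i.succ) (j := j.succ) (by simp only [Fin.val_succ]; omega)
    · rw [mul_inv_eq_one]
      exact X_comm (i := i.succ) (j := j.succ) (by simp only [Fin.val_succ]; omega))

lemma step_of {N : ℕ} (i : Fin N) : step N (X i) = X i.succ :=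
  PresentedGroup.toGroup.of _

/-- coset representatives `rword k = x_{k-1} x_{k-2} ⋯ x_0`. -/
def rword (N : ℕ) : ℕ → SymP N
  | 0 => 1
  | k + 1 => (if h : k < N then X ⟨k, h⟩ else 1) * rword N k

lemma comm_rword {N : ℕ} (i : Fin N) : ∀ k : ℕ, k + 1 ≤ (i : ℕ) →
    X i * rword N k = rword N k * X i
  | 0, _ => by simp [rword]
  | k + 1, h => by
    have hk : k < N := lt_of_lt_of_le (by omega) (le_of_lt i.isLt)
    rw [rword, dif_pos hk, ← mul_assoc, ← X_comm (i := (⟨k, hk⟩ : Fin N)) (j := i) (by simp; omega),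
      mul_assoc, comm_rword i k (by omega), mul_assoc]

lemma slide {N : ℕ} (i : Fin (N + 1)) (hb : (i : ℕ) + 1 < N + 1) :
    ∀ k : ℕ, (i : ℕ) + 2 ≤ k → k ≤ N + 1 →
    X i * rword (N + 1) k =
      rword (N + 1) k * X ⟨(i : ℕ) + 1, hb⟩ := by
  intro k
  induction k with
  | zero => omega
  | succ k IH =>
    intro h2 hk
    rcases Nat.lt_or_ge ((i : ℕ) + 2) (k + 1) with hlt | hge
    · -- k ≥ i + 2 : commute X i past X ⟨k⟩
      have hk' : k < N + 1 := by omega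
      rw [rword, dif_pos hk', ← mul_assoc,
        X_comm (i := i) (j := (⟨k, hk'⟩ : Fin (N + 1))) (by simp; omega),
        mul_assoc, IH (by omega) (by omega)]
      exact (mul_assoc _ _ _).symm
    · -- k + 1 = i + 2
      have hkk : k = (i : ℕ) + 1 := by omega
      subst hkk
      have h1 : (i : ℕ) + 1 < N + 1 := by omega
      have h0 : (i : ℕ) < N + 1 := by omega
      have hii : (⟨(i : ℕ), h0⟩ : Fin (N + 1)) = i := by ext; rfl
      rw [rword, rword, dif_pos h1, dif_pos h0, hii]
      calc X i * (X ⟨(i : ℕ) + 1, h1⟩ * (X i * rword (N + 1) (i : ℕ)))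
          = (X i * X ⟨(i : ℕ) + 1, h1⟩ * X i) * rword (N + 1) (i : ℕ) := by
            simp [mul_assoc]
        _ = (X ⟨(i : ℕ) + 1, h1⟩ * X i * X ⟨(i : ℕ) + 1, h1⟩) * rword (N + 1) (i : ℕ) := by
            rw [X_braid (by simp)]
        _ = X ⟨(i : ℕ) + 1, h1⟩ * X i * (rword (N + 1) (i : ℕ) * X ⟨(i : ℕ) + 1, h1⟩) := by
            rw [mul_assoc, mul_assoc, comm_rword _ _ (by simp), mul_assoc]
        _ = X ⟨(i : ℕ) + 1, h1⟩ * (X i * rword (N + 1) (i : ℕ)) * X ⟨(i : ℕ) + 1, h1⟩ := by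
            simp [mul_assoc]

/-- Key move lemma: multiplying a coset representative by a generator lands in
a coset representative times the image of `step`. -/
lemma move {N : ℕ} (i : Fin (N + 1)) (k : ℕ) (hk : k ≤ N + 1) :
    ∃ k' : ℕ, k' ≤ N + 1 ∧ ∃ g : SymP N,
      X i * rword (N + 1) k = rword (N + 1) k' * step N g := by
  rcases lt_trichotomy (i : ℕ) k with hlt | heq | hgt
  · rcases Nat.lt_or_ge ((i : ℕ) + 1) k with h2 | h1
    · -- i + 2 ≤ k : slide
      have hiN : (i : ℕ) < N := by omega
      refine ⟨k, hk, X ⟨(i : ℕ), hiN⟩, ?_⟩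
      rw [slide i (by omega) k (by omega) hk, step_of]
      congr 1
    · -- k = i + 1 : cancel
      have hkk : k = (i : ℕ) + 1 := by omega
      subst hkk
      refine ⟨(i : ℕ), by omega, 1, ?_⟩
      have h0 : (i : ℕ) < N + 1 := i.isLt
      have hii : (⟨(i : ℕ), h0⟩ : Fin (N + 1)) = i := by ext; rfl
      rw [rword, dif_pos h0, hii, ← mul_assoc, X_sq, one_mul, map_one, mul_one]
  · -- i = k
    subst heq
    refine ⟨(i : ℕ) + 1, by omega, 1, ?_⟩
    rw [map_one, mul_one, rword, dif_pos i.isLt]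
  · -- i ≥ k + 1 : commute past the whole word
    have h1 : 1 ≤ (i : ℕ) := by omega
    have hiN : (i : ℕ) - 1 < N := by omega
    refine ⟨k, hk, X ⟨(i : ℕ) - 1, hiN⟩, ?_⟩
    have hsucc : (⟨(i : ℕ) - 1, hiN⟩ : Fin N).succ = i := by
      ext; simp only [Fin.val_succ]; omega
    rw [comm_rword i k (by omega), step_of, hsucc]



lemma rword_zero (N : ℕ) : rword N 0 = 1 := rfl

/-- The covering map exhibiting `SymP (N+1)` as at most `N+2` cosets of the image
of `SymP N`. -/
noncomputable def cover (N : ℕ) : Fin (N + 2) × SymP N → SymP (N + 1) :=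
  fun p => rword (N + 1) (p.1 : ℕ) * step N p.2

lemma mul_cover (N : ℕ) (z : FreeGroup (Fin (N + 1))) :
    ∀ s ∈ Set.range (cover N),
      PresentedGroup.mk (symRels (N + 1)) z * s ∈ Set.range (cover N) := by
  induction z using FreeGroup.induction_on with
  | C1 => intro s hs; simpa using hs
  | of x =>
    rintro s ⟨⟨k, h⟩, rfl⟩
    obtain ⟨k', hk', g, hmove⟩ := move x (k : ℕ) (by omega)
    refine ⟨(⟨k', by omega⟩, g * h), ?_⟩
    show rword (N + 1) k' * step N (g * h) =
      PresentedGroup.mk _ (FreeGroup.of x) * cover N (k, h)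
    have hX : PresentedGroup.mk (symRels (N + 1)) (FreeGroup.of x) = X x := rfl
    rw [hX, cover, map_mul, ← mul_assoc, ← hmove, mul_assoc]
  | inv_of x ih =>
    intro s hs
    have hXi : ((PresentedGroup.mk (symRels (N + 1))) (FreeGroup.of x))⁻¹ =
        (PresentedGroup.mk (symRels (N + 1))) (FreeGroup.of x) := X_inv x
    rw [map_inv, hXi]
    exact ih s hs
  | mul z w ihz ihw =>
    intro s hs
    rw [map_mul, mul_assoc]
    exact ihz _ (ihw s hs)

lemma cover_surjective (N : ℕ) : Function.Surjective (cover N) := by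
  intro y
  obtain ⟨z, rfl⟩ := PresentedGroup.mk_surjective (symRels (N + 1)) y
  have h1 : (1 : SymP (N + 1)) ∈ Set.range (cover N) :=
    ⟨(⟨0, by omega⟩, 1), by simp [cover, rword_zero]⟩
  simpa using mul_cover N z 1 h1

theorem symP_finite_card : ∀ N : ℕ, Finite (SymP N) ∧
    Nat.card (SymP N) ≤ Nat.factorial (N + 1) := by
  intro N
  induction N with
  | zero =>
    have hsub : Subsingleton (SymP 0) := by
      constructor
      intro a b
      have ha : a ∈ (⊥ : Subgroup (SymP 0)) :=
        PresentedGroup.generated_by _ ⊥ (fun j => Fin.elim0 j) a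
      have hb : b ∈ (⊥ : Subgroup (SymP 0)) :=
        PresentedGroup.generated_by _ ⊥ (fun j => Fin.elim0 j) b
      rw [Subgroup.mem_bot] at ha hb
      rw [ha, hb]
    refine ⟨Finite.of_subsingleton, ?_⟩
    haveI := hsub
    haveI : Unique (SymP 0) := uniqueOfSubsingleton 1
    simp [Nat.card_unique]
  | succ N IH =>
    obtain ⟨hfin, hcard⟩ := IH
    haveI := hfin
    have hsurj := cover_surjective N
    haveI hfin' : Finite (SymP (N + 1)) := Finite.of_surjective _ hsurj
    refine ⟨hfin', ?_⟩
    calc Nat.card (SymP (N + 1)) ≤ Nat.card (Fin (N + 2) × SymP N) :=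
          Nat.card_le_card_of_surjective _ hsurj
      _ = (N + 2) * Nat.card (SymP N) := by simp [Nat.card_prod]
      _ ≤ (N + 2) * Nat.factorial (N + 1) := Nat.mul_le_mul_left _ hcard
      _ = Nat.factorial (N + 2) := (Nat.factorial_succ (N + 1)).symm

section SwapLemmas
variable {β : Type*} [DecidableEq β]

lemma swap_braid {a b c : β} (hab : a ≠ b) (hbc : b ≠ c) (hac : a ≠ c) :
    swap a b * swap b c * swap a b = swap b c * swap a b * swap b c := by
  have h1 : swap ((swap a b) b) ((swap a b) c) = swap a b * swap b c * (swap a b)⁻¹ :=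
    Equiv.swap_apply_apply (swap a b) b c
  have h2 : swap ((swap b c) a) ((swap b c) b) = swap b c * swap a b * (swap b c)⁻¹ :=
    Equiv.swap_apply_apply (swap b c) a b
  rw [Equiv.swap_apply_right, Equiv.swap_apply_of_ne_of_ne hac.symm hbc.symm,
    Equiv.swap_inv] at h1
  rw [Equiv.swap_apply_of_ne_of_ne hab hac, Equiv.swap_apply_left, Equiv.swap_inv] at h2
  rw [← h1, h2]

lemma swap_commute {a b c d : β} (hac : a ≠ c) (had : a ≠ d) (hbc : b ≠ c) (hbd : b ≠ d) :
    swap a b * swap c d = swap c d * swap a b := by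
  have h : swap ((swap c d) a) ((swap c d) b) = swap c d * swap a b * (swap c d)⁻¹ :=
    Equiv.swap_apply_apply (swap c d) a b
  rw [Equiv.swap_apply_of_ne_of_ne hac had, Equiv.swap_apply_of_ne_of_ne hbc hbd] at h
  calc swap a b * swap c d = swap c d * swap a b * (swap c d)⁻¹ * swap c d := by rw [← h]
    _ = swap c d * swap a b := by group

end SwapLemmas

/-- The projection onto the symmetric group. -/
noncomputable def proj (N : ℕ) : SymP N →* Perm (Fin (N + 1)) :=
  PresentedGroup.toGroup (f := fun i => Equiv.swap i.castSucc i.succ) (by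
    rintro r (⟨i, rfl⟩ | ⟨i, j, hij, rfl⟩ | ⟨i, j, hij, rfl⟩) <;>
      simp only [map_mul, map_inv, FreeGroup.lift_apply_of]
    · exact Equiv.swap_mul_self _ _
    · rw [mul_inv_eq_one]
      have hment : i.succ = j.castSucc := by ext; simp [Fin.val_succ, Fin.coe_castSucc, hij]
      have hab : i.castSucc ≠ i.succ := (Fin.castSucc_lt_succ (i := i)).ne
      have hbc : j.castSucc ≠ j.succ := (Fin.castSucc_lt_succ (i := j)).ne
      have hac : i.castSucc ≠ j.succ := by
        intro hcon
        have := congrArg Fin.val hcon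
        simp only [Fin.coe_castSucc, Fin.val_succ] at this
        omega
      rw [← hment] at hbc ⊢
      exact swap_braid hab hbc hac
    · rw [mul_inv_eq_one]
      have h1 : i.castSucc ≠ j.castSucc := by
        intro hcon; have := congrArg Fin.val hcon; simp at this; omega
      have h2 : i.castSucc ≠ j.succ := by
        intro hcon; have := congrArg Fin.val hcon; simp [Fin.val_succ] at this; omega
      have h3 : i.succ ≠ j.castSucc := by
        intro hcon; have := congrArg Fin.val hcon; simp [Fin.val_succ] at this; omega
      have h4 : i.succ ≠ j.succ := by
        intro hcon; have := congrArg Fin.val hcon; simp [Fin.val_succ] at this; omega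
      exact swap_commute h1 h2 h3 h4)

lemma proj_of {N : ℕ} (i : Fin N) : proj N (X i) = Equiv.swap i.castSucc i.succ :=
  PresentedGroup.toGroup.of _



lemma swap_mem_range (N : ℕ) : ∀ d : ℕ, ∀ a b : Fin (N + 1), (a : ℕ) < (b : ℕ) →
    (b : ℕ) - (a : ℕ) = d → swap a b ∈ (proj N).range := by
  intro d
  induction d using Nat.strong_induction_on with
  | _ d IH =>
    intro a b hab hd
    rcases Nat.eq_or_lt_of_le (Nat.one_le_iff_ne_zero.mpr (by omega) : 1 ≤ d) with h1 | h2
    · -- adjacent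
      have haN : (a : ℕ) < N := by omega
      have hcast : (⟨(a : ℕ), haN⟩ : Fin N).castSucc = a := by ext; simp
      have hsucc : (⟨(a : ℕ), haN⟩ : Fin N).succ = b := by ext; simp [Fin.val_succ]; omega
      exact ⟨X ⟨(a : ℕ), haN⟩, by rw [proj_of, hcast, hsucc]⟩
    · -- split at c = b - 1
      have hcN : (b : ℕ) - 1 < N + 1 := by omega
      set c : Fin (N + 1) := ⟨(b : ℕ) - 1, hcN⟩ with hc
      have hac : (a : ℕ) < (c : ℕ) := by simp [hc]; omega
      have hcb : (c : ℕ) < (b : ℕ) := by show (b : ℕ) - 1 < (b : ℕ); omega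
      have m1 : swap a c ∈ (proj N).range := IH (d - 1) (by omega) a c hac (by simp [hc]; omega)
      have m2 : swap c b ∈ (proj N).range := IH 1 (by omega) c b hcb (by simp [hc]; omega)
      have key : swap a b = swap c b * swap a c * swap c b := by
        have h := Equiv.swap_apply_apply (swap c b) a c
        rw [Equiv.swap_apply_of_ne_of_ne (by intro hcon; rw [hcon] at hac; omega)
          (by intro hcon; rw [hcon] at hab; omega), Equiv.swap_apply_left, Equiv.swap_inv] at h
        rw [← h]
      rw [key]
      exact Subgroup.mul_mem _ (Subgroup.mul_mem _ m2 m1) m2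
  
lemma proj_surjective (N : ℕ) : Function.Surjective (proj N) := by
  rw [← MonoidHom.range_eq_top]
  rw [← top_le_iff, ← Equiv.Perm.closure_isSwap]
  rw [Subgroup.closure_le]
  rintro σ ⟨x, y, hxy, rfl⟩
  rcases Nat.lt_or_ge (x : ℕ) (y : ℕ) with h | h
  · exact swap_mem_range N _ x y h rfl
  · have h' : (y : ℕ) < (x : ℕ) := by
      rcases Nat.lt_or_ge (y : ℕ) (x : ℕ) with h' | h'
      · exact h'
      · exact absurd (Fin.ext (by omega)) hxy
    rw [Equiv.swap_comm]
    exact swap_mem_range N _ y x h' rfl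

theorem proj_bijective (N : ℕ) : Function.Bijective (proj N) := by
  obtain ⟨hfin, hcard⟩ := symP_finite_card N
  haveI := hfin
  apply (proj_surjective N).bijective_of_nat_card_le
  calc Nat.card (SymP N) ≤ Nat.factorial (N + 1) := hcard
    _ = Nat.card (Perm (Fin (N + 1))) := by
        rw [Nat.card_eq_fintype_card, Fintype.card_perm, Fintype.card_fin]

end Stmt2Aux


namespace Stmt2

open Equiv

variable {l : ℕ}

-- basic recursions
lemma chainF_zero (l : ℕ) (i : ZMod (l + 1)) : chainF l i 0 = 1 := by
  simp [chainF]

lemma chainF_succ (l : ℕ) (i : ZMod (l + 1)) (m : ℕ) :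
    chainF l i (m + 1) = chainF l i m * T (i + (m : ZMod (l + 1)) + 1) := by
  simp [chainF, List.range_succ]

lemma garsideF_zero (l : ℕ) (i : ZMod (l + 1)) : garsideF l i 0 = 1 := by
  simp [garsideF]

lemma garsideF_succ (l : ℕ) (i : ZMod (l + 1)) (m : ℕ) :
    garsideF l i (m + 1) = chainF l i (m + 1) * garsideF l i m := by
  simp [garsideF, List.range_succ]

/-- The dihedral group acting on vertices, conjugated so as to normalize swaps:
rotations `x ↦ x - a` and reflections `x ↦ a + 1 - x`. -/
def dperm (l : ℕ) : DihedralGroup (l + 1) →* Perm (ZMod (l + 1)) where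
  toFun g := match g with
    | .r a => Equiv.subRight a
    | .sr a => Equiv.subLeft (a + 1)
  map_one' := by
    rw [show (1 : DihedralGroup (l + 1)) = .r 0 from rfl]
    ext x
    simp
  map_mul' := by
    rintro (a | a) (b | b) <;> ext x <;>
      simp only [DihedralGroup.r_mul_r, DihedralGroup.r_mul_sr, DihedralGroup.sr_mul_r,
        DihedralGroup.sr_mul_sr, Perm.mul_apply, Equiv.subRight_apply, Equiv.subLeft_apply] <;>
      ring

lemma dperm_r_apply (l : ℕ) (a x : ZMod (l + 1)) : dperm l (DihedralGroup.r a) x = x - a := rfl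

lemma dperm_sr_apply (l : ℕ) (a x : ZMod (l + 1)) : dperm l (DihedralGroup.sr a) x = a + 1 - x := rfl

/-- The map sending generators to their images in the symmetric group. -/
def fmap (l : ℕ) : (ZMod (l + 1) ⊕ DihedralGroup (l + 1)) → Perm (ZMod (l + 1)) :=
  Sum.elim (fun i => Equiv.swap i (i + 1)) (dperm l)

lemma lift_T (l : ℕ) (i : ZMod (l + 1)) :
    FreeGroup.lift (fmap l) (T i) = Equiv.swap i (i + 1) := by
  simp [T, fmap]

lemma lift_D (l : ℕ) (g : DihedralGroup (l + 1)) :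
    FreeGroup.lift (fmap l) (D g) = dperm l g := by
  simp [D, fmap]

section eval
variable {l : ℕ}

lemma cast_inj_of_lt {a b : ℕ} (ha : a < l + 1) (hb : b < l + 1) :
    ((a : ZMod (l + 1)) = (b : ZMod (l + 1))) ↔ a = b := by
  constructor
  · intro h
    have := congrArg ZMod.val h
    rwa [ZMod.val_cast_of_lt ha, ZMod.val_cast_of_lt hb] at this
  · rintro rfl; rfl

lemma lift_chainF (m : ℕ) (hm : m ≤ l) (i : ZMod (l + 1)) :
    ∀ k : ℕ, k < l + 1 →
    (FreeGroup.lift (fmap l) (chainF l i m)) (i + 1 + (k : ZMod (l + 1))) =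
      i + 1 + ((if k = m then 0 else if k < m then k + 1 else k : ℕ) : ZMod (l + 1)) := by
  induction m with
  | zero =>
    intro k hk
    rw [chainF_zero, map_one]
    simp only [Equiv.Perm.one_apply]
    exact congrArg (fun t : ℕ => i + 1 + (t : ZMod (l + 1))) (by split_ifs <;> omega)
  | succ m IH =>
    intro k hk
    have hm' : m ≤ l := by omega
    rw [chainF_succ, map_mul, lift_T, Equiv.Perm.mul_apply]
    have ha : i + (m : ZMod (l + 1)) + 1 = i + 1 + ((m : ℕ) : ZMod (l + 1)) := by ring
    have hb : i + (m : ZMod (l + 1)) + 1 + 1 = i + 1 + ((m + 1 : ℕ) : ZMod (l + 1)) := by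
      push_cast; ring
    rw [congrArg₂ Equiv.swap ha hb]
    have hswap : (Equiv.swap (i + 1 + ((m : ℕ) : ZMod (l + 1)))
        (i + 1 + ((m + 1 : ℕ) : ZMod (l + 1)))) (i + 1 + (k : ZMod (l + 1))) =
        i + 1 + ((if k = m then m + 1 else if k = m + 1 then m else k : ℕ) : ZMod (l + 1)) := by
      by_cases h1 : k = m
      · subst h1
        rw [Equiv.swap_apply_left, if_pos rfl]
      · by_cases h2 : k = m + 1
        · subst h2
          rw [Equiv.swap_apply_right, if_neg h1, if_pos rfl]
        · rw [Equiv.swap_apply_of_ne_of_ne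
            (fun hcon => h1 ((cast_inj_of_lt hk (by omega)).mp (add_left_cancel hcon)))
            (fun hcon => h2 ((cast_inj_of_lt hk (by omega)).mp (add_left_cancel hcon))),
            if_neg h1, if_neg h2]
    rw [hswap, IH hm' _ (by split_ifs <;> omega)]
    exact congrArg (fun t : ℕ => i + 1 + (t : ZMod (l + 1))) (by split_ifs <;> omega)

lemma lift_garsideF (m : ℕ) (hm : m ≤ l) (i : ZMod (l + 1)) :
    ∀ k : ℕ, k < l + 1 →
    (FreeGroup.lift (fmap l) (garsideF l i m)) (i + 1 + (k : ZMod (l + 1))) =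
      i + 1 + ((if k ≤ m then m - k else k : ℕ) : ZMod (l + 1)) := by
  induction m with
  | zero =>
    intro k hk
    rw [garsideF_zero, map_one]
    simp only [Equiv.Perm.one_apply]
    exact congrArg (fun t : ℕ => i + 1 + (t : ZMod (l + 1))) (by split_ifs <;> omega)
  | succ m IH =>
    intro k hk
    have hm' : m ≤ l := by omega
    rw [garsideF_succ, map_mul, Equiv.Perm.mul_apply, IH hm' k hk,
      lift_chainF (m + 1) hm i _ (by split_ifs <;> omega)]
    exact congrArg (fun t : ℕ => i + 1 + (t : ZMod (l + 1))) (by split_ifs <;> omega)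

end eval


section SwapLemmas
variable {β : Type*} [DecidableEq β]

lemma swap_braid {a b c : β} (hab : a ≠ b) (hbc : b ≠ c) (hac : a ≠ c) :
    swap a b * swap b c * swap a b = swap b c * swap a b * swap b c := by
  have h1 : swap ((swap a b) b) ((swap a b) c) = swap a b * swap b c * (swap a b)⁻¹ :=
    Equiv.swap_apply_apply (swap a b) b c
  have h2 : swap ((swap b c) a) ((swap b c) b) = swap b c * swap a b * (swap b c)⁻¹ :=
    Equiv.swap_apply_apply (swap b c) a b
  rw [Equiv.swap_apply_right, Equiv.swap_apply_of_ne_of_ne hac.symm hbc.symm,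
    Equiv.swap_inv] at h1
  rw [Equiv.swap_apply_of_ne_of_ne hab hac, Equiv.swap_apply_left, Equiv.swap_inv] at h2
  rw [← h1, h2]

lemma swap_commute {a b c d : β} (hac : a ≠ c) (had : a ≠ d) (hbc : b ≠ c) (hbd : b ≠ d) :
    swap a b * swap c d = swap c d * swap a b := by
  have h : swap ((swap c d) a) ((swap c d) b) = swap c d * swap a b * (swap c d)⁻¹ :=
    Equiv.swap_apply_apply (swap c d) a b
  rw [Equiv.swap_apply_of_ne_of_ne hac had, Equiv.swap_apply_of_ne_of_ne hbc hbd] at h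
  calc swap a b * swap c d = swap c d * swap a b * (swap c d)⁻¹ * swap c d := by rw [← h]
    _ = swap c d * swap a b := by group

end SwapLemmas

variable {l : ℕ}

lemma one_ne_zero' (hl : 2 ≤ l) : (1 : ZMod (l + 1)) ≠ 0 := by
  intro h
  have h' : ((1 : ℕ) : ZMod (l + 1)) = ((0 : ℕ) : ZMod (l + 1)) := by push_cast; exact h
  have := (cast_inj_of_lt (l := l) (a := 1) (b := 0) (by omega) (by omega)).mp h'
  omega

lemma two_ne_zero' (hl : 2 ≤ l) : (2 : ZMod (l + 1)) ≠ 0 := by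
  intro h
  have h' : ((2 : ℕ) : ZMod (l + 1)) = ((0 : ℕ) : ZMod (l + 1)) := by push_cast; exact h
  have := (cast_inj_of_lt (l := l) (a := 2) (b := 0) (by omega) (by omega)).mp h'
  omega

lemma ne_add_one (hl : 2 ≤ l) (x : ZMod (l + 1)) : x ≠ x + 1 := by
  intro h
  exact one_ne_zero' hl (left_eq_add.mp h)

lemma ne_add_two (hl : 2 ≤ l) (x : ZMod (l + 1)) : x ≠ x + 1 + 1 := by
  intro h
  rw [add_assoc] at h
  have := left_eq_add.mp h
  exact two_ne_zero' hl (by rw [← this]; norm_num)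

lemma dperm_sr_inv (a : ZMod (l + 1)) :
    (dperm l (DihedralGroup.sr a))⁻¹ = dperm l (DihedralGroup.sr a) := by
  apply inv_eq_of_mul_eq_one_right
  rw [← map_mul, DihedralGroup.sr_mul_sr, sub_self, ← DihedralGroup.one_def, map_one]

lemma lift_garsideF_apply (m : ℕ) (hm : m ≤ l) (i : ZMod (l + 1)) (x : ZMod (l + 1)) :
    (FreeGroup.lift (fmap l) (garsideF l i m)) x =
      if (x - (i + 1)).val ≤ m then i + 1 + (((m - (x - (i + 1)).val : ℕ)) : ZMod (l + 1))
      else x := by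
  have hx : i + 1 + (((x - (i + 1)).val : ℕ) : ZMod (l + 1)) = x := by
    rw [ZMod.natCast_val, ZMod.cast_id]; ring
  have h := lift_garsideF m hm i ((x - (i + 1)).val) (ZMod.val_lt _)
  rw [hx] at h
  rw [h]
  split_ifs with h'
  · rfl
  · exact hx

/-- All relators of the reduced Artin group map to `1` in the symmetric group. -/
theorem lift_rels (hl : 2 ≤ l) : ∀ r ∈ redArtinRels l, FreeGroup.lift (fmap l) r = 1 := by
  rintro r (⟨i, rfl⟩ | ⟨i, j, hij, hij1, hji1, rfl⟩ | ⟨g, h, rfl⟩ | ⟨g, i, rfl⟩ | ⟨i, rfl⟩ |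
    ⟨i, j, hij, rfl⟩)
  · -- braid
    simp only [map_mul, map_inv, lift_T, mul_inv_eq_one]
    exact swap_braid (ne_add_one hl i) (ne_add_one hl (i + 1)) (ne_add_two hl i)
  · -- commutation
    simp only [map_mul, map_inv, lift_T, mul_inv_eq_one]
    exact swap_commute hij (fun hc => hji1 hc.symm) hij1
      (fun hc => hij (add_right_cancel hc))
  · -- dihedral multiplication
    rw [map_mul, map_mul, map_inv, lift_D, lift_D, lift_D, mul_inv_eq_one, ← map_mul]
  · -- conjugation
    simp only [map_mul, map_inv, lift_D, lift_T, mul_inv_eq_one]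
    rw [← Equiv.swap_apply_apply]
    rcases g with a | a
    · have h1 : (dperm l (DihedralGroup.r a)) i = dact (DihedralGroup.r a) i := rfl
      have h2 : (dperm l (DihedralGroup.r a)) (i + 1) = dact (DihedralGroup.r a) i + 1 := by
        show i + 1 - a = i - a + 1
        ring
      rw [h1, h2]
    · have h1 : (dperm l (DihedralGroup.sr a)) i = dact (DihedralGroup.sr a) i + 1 := by
        show a + 1 - i = a - i + 1
        ring
      have h2 : (dperm l (DihedralGroup.sr a)) (i + 1) = dact (DihedralGroup.sr a) i := by
        show a + 1 - (i + 1) = a - i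
        ring
      rw [h1, h2, Equiv.swap_comm]
  · -- Garside vertex relation Δ_i g_i = 1
    rw [map_mul, lift_D, mul_eq_one_iff_eq_inv, dperm_sr_inv]
    ext x
    set A := (x - (i + 1)).val with hA
    have hAl : A ≤ l := Nat.lt_succ_iff.mp (ZMod.val_lt _)
    have hx : x = i + 1 + ((A : ℕ) : ZMod (l + 1)) := by
      rw [hA, ZMod.natCast_val, ZMod.cast_id]; ring
    have hl1 : ((l : ℕ) : ZMod (l + 1)) = -1 := by
      apply eq_neg_of_add_eq_zero_left
      rw [← Nat.cast_succ]
      exact ZMod.natCast_self (l + 1)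
    rw [lift_garsideF_apply l (le_refl l) i x, ← hA, if_pos hAl, dperm_sr_apply, hx]
    rw [Nat.cast_sub hAl, hl1]
    ring
  · -- Garside edge relation Δ_{ij} g_{ij} = 1
    set d := (j - i).val with hd
    have hd0 : d ≠ 0 := by
      rw [hd, Ne, ZMod.val_eq_zero]
      exact sub_ne_zero.mpr hij.symm
    have hdl : d ≤ l := Nat.lt_succ_iff.mp (ZMod.val_lt _)
    have hdc : ((d : ℕ) : ZMod (l + 1)) = j - i := by rw [hd, ZMod.natCast_val, ZMod.cast_id]
    have hl1 : ((l : ℕ) : ZMod (l + 1)) = -1 := by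
      apply eq_neg_of_add_eq_zero_left
      rw [← Nat.cast_succ]
      exact ZMod.natCast_self (l + 1)
    have hvji : (i - j).val = l + 1 - d := by
      have hneg : i - j = -(j - i) := by ring
      rw [hneg, ZMod.neg_val, if_neg (sub_ne_zero.mpr hij.symm), ← hd]
    have hm1 : (j - i).val - 1 = d - 1 := by rw [← hd]
    have hm2 : (i - j).val - 1 = l - d := by rw [hvji]; omega
    rw [hm1, hm2, map_mul, map_mul, lift_D, mul_eq_one_iff_eq_inv, dperm_sr_inv]
    ext x
    rw [Equiv.Perm.mul_apply]
    set A := (x - (j + 1)).val with hA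
    have hAl : A ≤ l := Nat.lt_succ_iff.mp (ZMod.val_lt _)
    have hx : x = j + 1 + ((A : ℕ) : ZMod (l + 1)) := by
      rw [hA, ZMod.natCast_val, ZMod.cast_id]; ring
    rw [lift_garsideF_apply (l - d) (by omega) j x, ← hA]
    by_cases hcase : A ≤ l - d
    · rw [if_pos hcase, lift_garsideF_apply (d - 1) (by omega) i _]
      have hyv : (j + 1 + ((l - d - A : ℕ) : ZMod (l + 1)) - (i + 1)).val = l - A := by
        have he : j + 1 + ((l - d - A : ℕ) : ZMod (l + 1)) - (i + 1) =
            ((l - A : ℕ) : ZMod (l + 1)) := by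
          have h1 : ((l - A : ℕ) : ZMod (l + 1)) =
              ((d : ℕ) : ZMod (l + 1)) + ((l - d - A : ℕ) : ZMod (l + 1)) := by
            rw [← Nat.cast_add]
            exact congrArg _ (by omega)
          rw [h1, hdc]; ring
        rw [he, ZMod.val_cast_of_lt (by omega)]
      rw [hyv, if_neg (by omega), dperm_sr_apply, hx]
      have hc2 : ((l - d - A : ℕ) : ZMod (l + 1)) =
          ((l : ℕ) : ZMod (l + 1)) - ((d : ℕ) : ZMod (l + 1)) - ((A : ℕ) : ZMod (l + 1)) := by
        rw [show l - d - A = l - (d + A) from by omega, Nat.cast_sub (by omega), Nat.cast_add]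
        ring
      rw [hc2, hl1, hdc]
      ring
    · rw [if_neg hcase, lift_garsideF_apply (d - 1) (by omega) i x]
      have hxv : (x - (i + 1)).val = d + A - (l + 1) := by
        have he : x - (i + 1) = ((d + A - (l + 1) : ℕ) : ZMod (l + 1)) := by
          have h2 : ((d + A : ℕ) : ZMod (l + 1)) = ((d + A - (l + 1) : ℕ) : ZMod (l + 1)) := by
            conv_lhs => rw [show d + A = (l + 1) + (d + A - (l + 1)) from by omega]
            rw [Nat.cast_add, ZMod.natCast_self, zero_add]
          calc x - (i + 1) = ((d : ℕ) : ZMod (l + 1)) + ((A : ℕ) : ZMod (l + 1)) := by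
                rw [hdc, hx]; ring
            _ = ((d + A : ℕ) : ZMod (l + 1)) := by rw [Nat.cast_add]
            _ = ((d + A - (l + 1) : ℕ) : ZMod (l + 1)) := h2
        rw [he, ZMod.val_cast_of_lt (by omega)]
      rw [hxv, if_pos (by omega), dperm_sr_apply, hx]
      rw [show d - 1 - (d + A - (l + 1)) = l - A from by omega]
      rw [Nat.cast_sub hAl, hl1]
      ring



open DihedralGroup

variable {l : ℕ}

lemma relquot {α : Type*} {rels : Set (FreeGroup α)} {r : FreeGroup α} (h : r ∈ rels) :
    PresentedGroup.mk rels r = 1 := by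
  have : r ∈ Subgroup.normalClosure rels := Subgroup.subset_normalClosure h
  exact (QuotientGroup.eq_one_iff r).mpr this

/-- generator `t_i` of the reduced Artin group. -/
def tt (l : ℕ) (i : ZMod (l + 1)) : PresentedGroup (redArtinRels l) :=
  PresentedGroup.of (Sum.inl i)

/-- generator `g ∈ S(Γ)` of the reduced Artin group. -/
def dd (l : ℕ) (g : DihedralGroup (l + 1)) : PresentedGroup (redArtinRels l) :=
  PresentedGroup.of (Sum.inr g)

/-- image of a chain in the reduced Artin group. -/
def cq (l : ℕ) (i : ZMod (l + 1)) (m : ℕ) : PresentedGroup (redArtinRels l) :=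
  PresentedGroup.mk (redArtinRels l) (chainF l i m)

/-- image of a Garside element in the reduced Artin group. -/
def gq (l : ℕ) (i : ZMod (l + 1)) (m : ℕ) : PresentedGroup (redArtinRels l) :=
  PresentedGroup.mk (redArtinRels l) (garsideF l i m)

lemma mkT (i : ZMod (l + 1)) : PresentedGroup.mk (redArtinRels l) (T i) = tt l i := rfl

lemma mkD (g : DihedralGroup (l + 1)) :
    PresentedGroup.mk (redArtinRels l) (D g) = dd l g := rfl

lemma rel_braid (i : ZMod (l + 1)) :
    tt l i * tt l (i + 1) * tt l i = tt l (i + 1) * tt l i * tt l (i + 1) := by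
  have := relquot (rels := redArtinRels l) (Or.inl ⟨i, rfl⟩)
  simp only [map_mul, map_inv, mkT] at this
  rwa [mul_inv_eq_one] at this

lemma rel_comm {i j : ZMod (l + 1)} (h1 : i ≠ j) (h2 : i + 1 ≠ j) (h3 : j + 1 ≠ i) :
    tt l i * tt l j = tt l j * tt l i := by
  have := relquot (rels := redArtinRels l) (Or.inr (Or.inl ⟨i, j, h1, h2, h3, rfl⟩))
  simp only [map_mul, map_inv, mkT] at this
  rwa [mul_inv_eq_one] at this

lemma rel_dmul (g h : DihedralGroup (l + 1)) : dd l g * dd l h = dd l (g * h) := by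
  have := relquot (rels := redArtinRels l) (Or.inr (Or.inr (Or.inl ⟨g, h, rfl⟩)))
  simp only [map_mul, map_inv, mkD] at this
  rwa [mul_inv_eq_one] at this

lemma rel_conj (g : DihedralGroup (l + 1)) (i : ZMod (l + 1)) :
    dd l g * tt l i * (dd l g)⁻¹ = tt l (dact g i) := by
  have := relquot (rels := redArtinRels l) (Or.inr (Or.inr (Or.inr (Or.inl ⟨g, i, rfl⟩))))
  simp only [map_mul, map_inv, mkT, mkD] at this
  rwa [mul_inv_eq_one] at this

lemma rel_gars1 (i : ZMod (l + 1)) : gq l i l * dd l (sr (2 * i)) = 1 := by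
  have := relquot (rels := redArtinRels l)
    (Or.inr (Or.inr (Or.inr (Or.inr (Or.inl ⟨i, rfl⟩)))))
  simpa only [map_mul, mkD, gq] using this

lemma rel_gars2 {i j : ZMod (l + 1)} (hij : i ≠ j) :
    gq l i ((j - i).val - 1) * gq l j ((i - j).val - 1) * dd l (sr (i + j)) = 1 := by
  have := relquot (rels := redArtinRels l)
    (Or.inr (Or.inr (Or.inr (Or.inr (Or.inr ⟨i, j, hij, rfl⟩)))))
  simpa only [map_mul, mkD, gq] using this

lemma dd_one : dd l 1 = 1 := by
  have := rel_dmul (l := l) 1 1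
  rw [mul_one] at this
  exact mul_left_cancel (a := dd l 1) (by rw [this, mul_one])

lemma dd_inv (g : DihedralGroup (l + 1)) : (dd l g)⁻¹ = dd l g⁻¹ := by
  apply inv_eq_of_mul_eq_one_right
  rw [rel_dmul, mul_inv_cancel, dd_one]

lemma ddsr_inv (a : ZMod (l + 1)) : (dd l (sr a))⁻¹ = dd l (sr a) := by
  apply inv_eq_of_mul_eq_one_right
  rw [rel_dmul, sr_mul_sr, sub_self, ← DihedralGroup.one_def, dd_one]

lemma cq_zero (i : ZMod (l + 1)) : cq l i 0 = 1 := by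
  rw [cq, chainF_zero, map_one]

lemma cq_succ (i : ZMod (l + 1)) (m : ℕ) :
    cq l i (m + 1) = cq l i m * tt l (i + (m : ZMod (l + 1)) + 1) := by
  rw [cq, chainF_succ, map_mul, mkT, cq]

lemma gq_zero (i : ZMod (l + 1)) : gq l i 0 = 1 := by
  rw [gq, garsideF_zero, map_one]

lemma gq_succ (i : ZMod (l + 1)) (m : ℕ) :
    gq l i (m + 1) = cq l i (m + 1) * gq l i m := by
  rw [gq, garsideF_succ, map_mul, cq, gq]

set_option linter.unusedSectionVars false

section derive
variable (hl : 2 ≤ l)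
include hl

lemma val_neg_one : (-1 : ZMod (l + 1)).val = l := by
  haveI : Fact (1 < l + 1) := ⟨by omega⟩
  rw [ZMod.neg_val, if_neg (one_ne_zero' hl), ZMod.val_one]
  omega

lemma val_neg_two : (-2 : ZMod (l + 1)).val = l - 1 := by
  have h2 : ((2 : ℕ) : ZMod (l + 1)) = (2 : ZMod (l + 1)) := by push_cast; rfl
  rw [ZMod.neg_val]
  rw [if_neg (two_ne_zero' hl), ← h2, ZMod.val_cast_of_lt (by omega)]
  omega

lemma gars_vertex (i : ZMod (l + 1)) : gq l i l = dd l (sr (2 * i)) := by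
  have h := rel_gars1 (l := l) i
  rw [mul_eq_one_iff_eq_inv, ddsr_inv] at h
  exact h

lemma gars_edge1 (i : ZMod (l + 1)) : gq l i (l - 1) = dd l (sr (2 * i - 1)) := by
  haveI : Fact (1 < l + 1) := ⟨by omega⟩
  have hne : i - 1 ≠ i := by
    intro h
    exact one_ne_zero' hl (by
      have := sub_eq_iff_eq_add.mp h
      have h2 : i = i + 1 := by conv_lhs => rw [this]
      exact (left_eq_add.mp h2))
  have h := rel_gars2 (l := l) hne
  have hv1 : (i - (i - 1)).val - 1 = 0 := by
    rw [show i - (i - 1) = 1 from by ring, ZMod.val_one]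
  have hv2 : ((i - 1) - i).val - 1 = l - 1 := by
    rw [show (i - 1) - i = -1 from by ring, val_neg_one hl]
  rw [hv1, hv2, gq_zero, one_mul, show (i - 1) + i = 2 * i - 1 from by ring,
    mul_eq_one_iff_eq_inv, ddsr_inv] at h
  exact h

lemma chain_rho (i : ZMod (l + 1)) : cq l i l = dd l (DihedralGroup.r (-1)) := by
  have h : gq l i l = cq l i l * gq l i (l - 1) := by
    have h0 := gq_succ (l := l) i (l - 1)
    rwa [show (l - 1) + 1 = l from by omega] at h0
  rw [gars_vertex hl, gars_edge1 hl] at h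
  have : cq l i l = dd l (sr (2 * i)) * (dd l (sr (2 * i - 1)))⁻¹ := by
    rw [h]; group
  rw [ddsr_inv, rel_dmul, sr_mul_sr, show (2 * i - 1) - 2 * i = -1 from by ring] at this
  exact this

lemma gars_edge2 (i : ZMod (l + 1)) :
    gq l i (l - 2) = (tt l (i - 1))⁻¹ * dd l (sr (2 * i - 2)) := by
  have hne : i - 2 ≠ i := by
    intro h
    exact two_ne_zero' hl (by
      have h2 : i = i + 2 := by conv_lhs => rw [sub_eq_iff_eq_add.mp h]
      exact (left_eq_add.mp h2))
  have h := rel_gars2 (l := l) hne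
  have h2c : ((2 : ℕ) : ZMod (l + 1)) = (2 : ZMod (l + 1)) := by push_cast; rfl
  have hv1 : (i - (i - 2)).val - 1 = 1 := by
    rw [show i - (i - 2) = 2 from by ring, ← h2c, ZMod.val_cast_of_lt (by omega)]
  have hv2 : ((i - 2) - i).val - 1 = l - 2 := by
    rw [show (i - 2) - i = -2 from by ring, val_neg_two hl]
    omega
  have hgq1 : gq l (i - 2) 1 = tt l (i - 1) := by
    have h0 := gq_succ (l := l) (i - 2) 0
    have h1 := cq_succ (l := l) (i - 2) 0
    simp only [Nat.zero_add] at h0 h1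
    rw [h0, h1, gq_zero, mul_one, cq_zero, one_mul]
    exact congrArg (tt l) (by push_cast; ring)
  rw [hv1, hv2, hgq1, show (i - 2) + i = 2 * i - 2 from by ring] at h
  have hsolve : gq l i (l - 2) =
      (tt l (i - 1))⁻¹ * (tt l (i - 1) * gq l i (l - 2) * dd l (sr (2 * i - 2))) *
        (dd l (sr (2 * i - 2)))⁻¹ := by group
  rw [h, mul_one, ddsr_inv] at hsolve
  exact hsolve

lemma t_sq (j : ZMod (l + 1)) : tt l j * tt l j = 1 := by
  set i := j + 1 with hi
  have hij : i - 1 = j := by rw [hi]; ring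
  -- gq i (l-1) = cq i (l-1) * gq i (l-2)
  have hsplit : gq l i (l - 1) = cq l i (l - 1) * gq l i (l - 2) := by
    have h0 := gq_succ (l := l) i (l - 2)
    rwa [show (l - 2) + 1 = l - 1 from by omega] at h0
  rw [gars_edge1 hl, gars_edge2 hl] at hsplit
  -- cq i (l-1) * tt(i-1)⁻¹ = dd (sr (2i-1)) * dd (sr (2i-2))⁻¹ = dd (r (-1))
  have hkey : cq l i (l - 1) * (tt l (i - 1))⁻¹ = dd l (DihedralGroup.r (-1)) := by
    have : cq l i (l - 1) * (tt l (i - 1))⁻¹ =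
        dd l (sr (2 * i - 1)) * (dd l (sr (2 * i - 2)))⁻¹ := by
      rw [hsplit]; group
    rw [ddsr_inv, rel_dmul, sr_mul_sr,
      show (2 * i - 2) - (2 * i - 1) = -1 from by ring] at this
    exact this
  -- cq i l = cq i (l-1) * tt (i-1)
  have hchain : cq l i l = cq l i (l - 1) * tt l (i - 1) := by
    have h0 := cq_succ (l := l) i (l - 1)
    rw [show (l - 1) + 1 = l from by omega] at h0
    rw [h0]
    congr 1
    apply congrArg (tt l)
    have hc : ((l - 1 : ℕ) : ZMod (l + 1)) = -2 := by
      rw [show ((l - 1 : ℕ) : ZMod (l + 1)) = ((l + 1 : ℕ) : ZMod (l + 1)) - 2 from by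
        push_cast [Nat.cast_sub (by omega : 1 ≤ l)]; ring]
      rw [ZMod.natCast_self]; ring
    rw [hc]; ring
  have : cq l i (l - 1) * tt l (i - 1) = cq l i (l - 1) * (tt l (i - 1))⁻¹ := by
    rw [← hchain, chain_rho hl, ← hkey]
  have htinv : tt l (i - 1) = (tt l (i - 1))⁻¹ := mul_left_cancel this
  rw [hij] at htinv
  nth_rewrite 2 [htinv]
  rw [mul_inv_cancel]

end derive


open DihedralGroup Equiv

variable {l : ℕ}

section Membership
variable (K : Subgroup (PresentedGroup (redArtinRels l)))

lemma cq_mem {j : ZMod (l + 1)} :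
    ∀ m : ℕ, (∀ s : ℕ, s < m → tt l (j + (s : ZMod (l + 1)) + 1) ∈ K) → cq l j m ∈ K := by
  intro m
  induction m with
  | zero => intro _; rw [cq_zero]; exact one_mem K
  | succ m IH =>
    intro h
    rw [cq_succ]
    exact mul_mem (IH (fun s hs => h s (by omega))) (h m (by omega))

lemma gq_mem {j : ZMod (l + 1)} (hT : ∀ i, tt l i ∈ K) : ∀ m : ℕ, gq l j m ∈ K := by
  intro m
  induction m with
  | zero => rw [gq_zero]; exact one_mem K
  | succ m IH =>
    rw [gq_succ]
    exact mul_mem (cq_mem K _ (fun s _ => hT _)) IH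

lemma rho_conj (x : ZMod (l + 1)) :
    dd l (DihedralGroup.r (-1)) * tt l x * (dd l (DihedralGroup.r (-1)))⁻¹ = tt l (x + 1) := by
  rw [rel_conj]
  exact congrArg (tt l) (by show x - (-1) = x + 1; ring)

lemma tt_mem_all (hρ : dd l (DihedralGroup.r (-1)) ∈ K)
    (hT0 : tt l 0 ∈ K) : ∀ i : ZMod (l + 1), tt l i ∈ K := by
  have hnat : ∀ k : ℕ, tt l ((k : ℕ) : ZMod (l + 1)) ∈ K := by
    intro k
    induction k with
    | zero => simpa using hT0
    | succ k IH =>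
      have : tt l (((k : ℕ) : ZMod (l + 1)) + 1) ∈ K := by
        rw [← rho_conj]
        exact mul_mem (mul_mem hρ IH) (inv_mem hρ)
      simpa [Nat.cast_succ] using this
  intro i
  have := hnat i.val
  rwa [ZMod.natCast_zmod_val] at this

lemma dd_r_mem (hρ : dd l (DihedralGroup.r (-1)) ∈ K) :
    ∀ a : ZMod (l + 1), dd l (DihedralGroup.r a) ∈ K := by
  have hneg : ∀ m : ℕ, dd l (DihedralGroup.r (-(m : ZMod (l + 1)))) ∈ K := by
    intro m
    induction m with
    | zero =>
      have : dd l (DihedralGroup.r (-((0 : ℕ) : ZMod (l + 1)))) = 1 := by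
        rw [show (-((0 : ℕ) : ZMod (l + 1))) = 0 by norm_num, ← DihedralGroup.one_def, dd_one]
      rw [this]; exact one_mem K
    | succ m IH =>
      have hmul : dd l (DihedralGroup.r (-(m : ZMod (l + 1)))) * dd l (DihedralGroup.r (-1)) =
          dd l (DihedralGroup.r (-((m + 1 : ℕ) : ZMod (l + 1)))) := by
        rw [rel_dmul, r_mul_r]
        exact congrArg (dd l) (congrArg DihedralGroup.r (by push_cast; ring))
      rw [← hmul]
      exact mul_mem IH hρ
  intro a
  have := hneg (-a).val
  rwa [show -(((-a).val : ℕ) : ZMod (l + 1)) = a by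
    rw [ZMod.natCast_val, ZMod.cast_id]; ring] at this

lemma dd_mem_all (hl : 2 ≤ l) (hT : ∀ i, tt l i ∈ K) :
    ∀ g : DihedralGroup (l + 1), dd l g ∈ K := by
  have hρ : dd l (DihedralGroup.r (-1)) ∈ K := by
    rw [← chain_rho hl 0]
    exact cq_mem K l (fun s _ => hT _)
  rintro (a | a)
  · exact dd_r_mem K hρ a
  · have hsr0 : dd l (sr 0) ∈ K := by
      have h := gars_vertex hl (0 : ZMod (l + 1))
      rw [show (2 * (0 : ZMod (l + 1))) = 0 by ring] at h
      rw [← h]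
      exact gq_mem K hT l
    have : dd l (sr 0) * dd l (DihedralGroup.r a) = dd l (sr a) := by
      rw [rel_dmul, sr_mul_r, zero_add]
    rw [← this]
    exact mul_mem hsr0 (dd_r_mem K hρ a)

lemma K_eq_top (hl : 2 ≤ l) (hT0 : ∀ k : ℕ, k < l → tt l ((k : ℕ) : ZMod (l + 1)) ∈ K) :
    ∀ x : PresentedGroup (redArtinRels l), x ∈ K := by
  have hρ : dd l (DihedralGroup.r (-1)) ∈ K := by
    rw [← chain_rho hl (-1)]
    apply cq_mem K l
    intro s hs
    have : (-1 : ZMod (l + 1)) + (s : ZMod (l + 1)) + 1 = ((s : ℕ) : ZMod (l + 1)) := by ring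
    rw [this]
    exact hT0 s hs
  have hT : ∀ i, tt l i ∈ K := tt_mem_all K hρ (by
    have := hT0 0 (by omega)
    simpa using this)
  intro x
  apply PresentedGroup.generated_by _ K _ x
  rintro (i | g)
  · exact hT i
  · exact dd_mem_all K hl hT g

end Membership

/-- The equivalence `Fin (l+1) ≃ ZMod (l+1)`. -/
def finZMod (l : ℕ) : Fin (l + 1) ≃ ZMod (l + 1) where
  toFun k := ((k : ℕ) : ZMod (l + 1))
  invFun x := ⟨x.val, ZMod.val_lt x⟩
  left_inv k := by
    ext
    simp [ZMod.val_cast_of_lt k.isLt]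
  right_inv x := by
    simp [ZMod.natCast_zmod_val]

/-- `Perm` transport as a `MulEquiv`. -/
def permMulEquiv {α β : Type*} (e : α ≃ β) : Perm α ≃* Perm β where
  toEquiv := e.permCongr
  map_mul' p q := by
    ext x
    simp [Equiv.permCongr_apply, Perm.mul_apply]

theorem reducedArtin_Ahat_iso_symmGroup' (l : ℕ) (hl : 2 ≤ l) :
    ∃ φ : PresentedGroup (redArtinRels l) ≃* Equiv.Perm (ZMod (l + 1)),
      ∀ i : ZMod (l + 1),
        φ (PresentedGroup.of (Sum.inl i)) = Equiv.swap i (i + 1) := by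
  classical
  -- the homomorphism onto the symmetric group
  set φ0 : PresentedGroup (redArtinRels l) →* Perm (ZMod (l + 1)) :=
    PresentedGroup.toGroup (lift_rels hl) with hφ0
  have hφ0T : ∀ i : ZMod (l + 1), φ0 (tt l i) = Equiv.swap i (i + 1) := by
    intro i
    rw [hφ0, tt]
    exact PresentedGroup.toGroup.of (lift_rels hl)
  -- the homomorphism from the presented symmetric group
  have homCrels : ∀ r ∈ Stmt2Aux.symRels l,
      FreeGroup.lift (fun k : Fin l => tt l ((k : ℕ) : ZMod (l + 1))) r = 1 := by
    rintro r (⟨i, rfl⟩ | ⟨i, j, hij, rfl⟩ | ⟨i, j, hij, rfl⟩) <;>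
      simp only [map_mul, map_inv, FreeGroup.lift_apply_of]
    · exact t_sq hl _
    · rw [mul_inv_eq_one]
      have hcast : ((j : ℕ) : ZMod (l + 1)) = ((i : ℕ) : ZMod (l + 1)) + 1 := by
        rw [← hij]; push_cast; ring
      rw [hcast]
      exact rel_braid _
    · rw [mul_inv_eq_one]
      have hjl : (j : ℕ) < l := j.isLt
      have hil : (i : ℕ) < l := i.isLt
      apply rel_comm
      · intro hc
        have := (cast_inj_of_lt (l := l) (by omega) (by omega)).mp hc
        omega
      · intro hc
        have hc' : (((i : ℕ) + 1 : ℕ) : ZMod (l + 1)) = ((j : ℕ) : ZMod (l + 1)) := by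
          push_cast; push_cast at hc; exact hc
        have := (cast_inj_of_lt (l := l) (by omega) (by omega)).mp hc'
        omega
      · intro hc
        have hc' : (((j : ℕ) + 1 : ℕ) : ZMod (l + 1)) = ((i : ℕ) : ZMod (l + 1)) := by
          push_cast; push_cast at hc; exact hc
        have := (cast_inj_of_lt (l := l) (by omega) (by omega)).mp hc'
        omega
  set homC : Stmt2Aux.SymP l →* PresentedGroup (redArtinRels l) :=
    PresentedGroup.toGroup homCrels with hhomC
  have homC_of : ∀ k : Fin l, homC (Stmt2Aux.X k) = tt l ((k : ℕ) : ZMod (l + 1)) := by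
    intro k
    rw [hhomC, Stmt2Aux.X]
    exact PresentedGroup.toGroup.of homCrels
  -- the isomorphism SymP l ≃* Perm (ZMod (l+1))
  set Θ : Stmt2Aux.SymP l ≃* Perm (ZMod (l + 1)) :=
    (MulEquiv.ofBijective (Stmt2Aux.proj l) (Stmt2Aux.proj_bijective l)).trans
      (permMulEquiv (finZMod l)) with hΘ
  have hΘ_of : ∀ k : Fin l, Θ (Stmt2Aux.X k) =
      Equiv.swap ((k : ℕ) : ZMod (l + 1)) (((k : ℕ) : ZMod (l + 1)) + 1) := by
    intro k
    rw [hΘ]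
    have h1 : (MulEquiv.ofBijective (Stmt2Aux.proj l) (Stmt2Aux.proj_bijective l))
        (Stmt2Aux.X k) = Equiv.swap k.castSucc k.succ := Stmt2Aux.proj_of k
    rw [MulEquiv.trans_apply, h1]
    show (finZMod l).permCongr (Equiv.swap k.castSucc k.succ) = _
    rw [Equiv.permCongr_def, Equiv.symm_trans_swap_trans]
    have e1 : finZMod l k.castSucc = ((k : ℕ) : ZMod (l + 1)) := by
      show (((k.castSucc : Fin (l + 1)) : ℕ) : ZMod (l + 1)) = _
      rw [Fin.coe_castSucc]
    have e2 : finZMod l k.succ = ((k : ℕ) : ZMod (l + 1)) + 1 := by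
      show (((k.succ : Fin (l + 1)) : ℕ) : ZMod (l + 1)) = _
      rw [Fin.val_succ]
      push_cast
      ring
    rw [e1, e2]
  -- φ0 ∘ homC = Θ
  have hcomp : φ0.comp homC = Θ.toMonoidHom := by
    apply PresentedGroup.ext
    intro k
    rw [MonoidHom.comp_apply]
    show φ0 (homC (Stmt2Aux.X k)) = Θ (Stmt2Aux.X k)
    rw [homC_of, hφ0T, hΘ_of]
  have hcomp' : ∀ y, φ0 (homC y) = Θ y := fun y => by
    have := congrArg (fun f => f y) hcomp
    simpa using this
  -- homC is surjective
  have hsurj : Function.Surjective homC := by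
    intro x
    have hXmem : ∀ k : ℕ, k < l → tt l ((k : ℕ) : ZMod (l + 1)) ∈ homC.range := by
      intro k hk
      exact ⟨Stmt2Aux.X ⟨k, hk⟩, homC_of ⟨k, hk⟩⟩
    obtain ⟨y, hy⟩ := K_eq_top homC.range hl hXmem x
    exact ⟨y, hy⟩
  -- φ0 is bijective
  have hbij : Function.Bijective φ0 := by
    constructor
    · intro a b hab
      obtain ⟨a', rfl⟩ := hsurj a
      obtain ⟨b', rfl⟩ := hsurj b
      rw [hcomp', hcomp'] at hab
      rw [Θ.injective hab]
    · intro σ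
      exact ⟨homC (Θ.symm σ), by rw [hcomp', MulEquiv.apply_symm_apply]⟩
  refine ⟨MulEquiv.ofBijective φ0 hbij, ?_⟩
  intro i
  exact hφ0T i



/-- For `l > 1`, the natural surjection of the reduced Artin group of type `Â_l` onto
the finite Weyl group `S_{l+1}` (the linear Weyl group modulo its center) is an
isomorphism; the generator `t_i` maps to the transposition `(i, i+1)`. -/
theorem reducedArtin_Ahat_iso_symmGroup (l : ℕ) (hl : 2 ≤ l) :
    ∃ φ : ReducedArtinAhat l ≃* Equiv.Perm (ZMod (l + 1)),
      ∀ i : ZMod (l + 1),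
        φ (PresentedGroup.of (Sum.inl i)) = Equiv.swap i (i + 1) := by
  exact reducedArtin_Ahat_iso_symmGroup' l hl

end Stmt2
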